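/- Let G be the systematic generator matrix of Ham(r,2), r > 3, with parity-check matrix H, and let I be a set of systematic (data) coordinates with |I| ≥ 2 and Σ_{j∈I} v_j = 0 in F_2^r. Then every recovery set of every data symbol i ∈ I contains some element of I, so I itself is a vertex cover of the partial recovery hypergraph, and every achievable demand supported on I satisfies Σ_{i∈I} λ_i ≤ |I|. -/

import Mathlib

/-- `R` is a recovery set for data symbol `i` with respect to the generator matrix `G`. -/
def IsRecoverySet {k n : ℕ} {F : Type*} [Field F] (G : Matrix (Fin k) (Fin n) F)
    (i : Fin k) (R : Finset (Fin n)) : Prop :=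
  (Pi.single i 1 : Fin k → F) ∈ Submodule.span F ((fun j => fun a => G a j) '' (R : Set (Fin n)))

/-- The demand vector `lam` is achievable for the storage system encoded by `G` with unit
server capacities: there is a nonnegative allocation of each demand `lam i` over the recovery
sets of symbol `i` such that every node serves total load at most `1`. -/
def Achievable {k n : ℕ} {F : Type*} [Field F] (G : Matrix (Fin k) (Fin n) F)
    (lam : Fin k → ℝ) : Prop :=
  ∃ w : Fin k → Finset (Fin n) → ℝ,
    (∀ i R, 0 ≤ w i R) ∧
    (∀ i R, w i R ≠ 0 → IsRecoverySet G i R) ∧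
    (∀ i, ∑ R : Finset (Fin n), w i R = lam i) ∧
    (∀ v : Fin n, (∑ i : Fin k, ∑ R : Finset (Fin n), if v ∈ R then w i R else 0) ≤ 1)

/-- Let `G` be the systematic generator matrix of `Ham(r,2)`, `r > 3`, with
parity-check matrix `H`, and let `I` be a set of data coordinates with `|I| ≥ 2` and
`∑_{j ∈ I} v_{S j} = 0` in `F_2^r` (where `S a` is the systematic node of data symbol `a`).
Then every recovery set of every data symbol `i ∈ I` contains the systematic node of some
element of `I` (so `I` is a vertex cover of the partial recovery hypergraph), and every
achievable demand supported on `I` satisfies `∑_{i ∈ I} λ_i ≤ |I|`. -/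
theorem stmt15 {r n k : ℕ} (hr : 3 < r) (hn : n = 2 ^ r - 1) (hk : k = 2 ^ r - 1 - r)
    (H : Matrix (Fin r) (Fin n) (ZMod 2))
    (hcols : ∀ v : Fin r → ZMod 2, v ≠ 0 → ∃! j : Fin n, (fun a => H a j) = v)
    (G : Matrix (Fin k) (Fin n) (ZMod 2))
    (hspan : Submodule.span (ZMod 2) (Set.range G) = LinearMap.ker H.mulVecLin)
    (S : Fin k → Fin n)
    (hS : ∀ a : Fin k, (fun b => G b (S a)) = Pi.single a 1)
    (I : Finset (Fin k)) (hI : 2 ≤ I.card)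
    (hsum : (∑ a ∈ I, fun b => H b (S a)) = (0 : Fin r → ZMod 2)) :
    (∀ i ∈ I, ∀ R : Finset (Fin n), IsRecoverySet G i R → ∃ a ∈ I, S a ∈ R) ∧
      (∀ lam : Fin k → ℝ, Achievable G lam → (∀ m ∉ I, lam m = 0) →
        ∑ i ∈ I, lam i ≤ (I.card : ℝ)) := by
  classical
  have hGS : ∀ a b : Fin k, G b (S a) = (Pi.single a 1 : Fin k → ZMod 2) b :=
    fun a b => congrFun (hS a) b
  have hSinj : Function.Injective S := by
    intro a a' hE
    by_contra hne
    have h1 : G a (S a) = G a (S a') := by rw [hE]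
    rw [hGS a a, hGS a' a] at h1
    rw [Pi.single_apply, Pi.single_apply, if_pos rfl, if_neg hne] at h1
    exact one_ne_zero h1
  -- any element of the row space vanishing at all systematic positions is zero
  have key : ∀ z : Fin n → ZMod 2, z ∈ Submodule.span (ZMod 2) (Set.range G) →
      (∀ a, z (S a) = 0) → z = 0 := by
    intro z hz hz0
    replace hz := (Submodule.mem_span_range_iff_exists_fun (R := ZMod 2) (v := (G : Fin k → Fin n → ZMod 2))).mp hz
    obtain ⟨t, ht⟩ := hz
    have hts : ∀ a, t a = 0 := by
      intro a
      have h2 : (∑ b : Fin k, t b • G b) (S a) = t a := by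
        simp only [Finset.sum_apply, Pi.smul_apply, smul_eq_mul, hGS, Pi.single_apply,
          mul_ite, mul_one, mul_zero]
        simp
      rw [ht, hz0 a] at h2
      exact h2.symm
    rw [← ht]
    simp [hts]
  set c : Fin n → ZMod 2 := ∑ a ∈ I, G a with hc
  set d : Fin n → ZMod 2 := ∑ a ∈ I, Pi.single (S a) (1 : ZMod 2) with hd
  have hGker : ∀ a : Fin k, G a ∈ LinearMap.ker H.mulVecLin := by
    intro a
    rw [← hspan]
    exact Submodule.subset_span ⟨a, rfl⟩
  have hcd : c = d := by
    have hmem : c - d ∈ Submodule.span (ZMod 2) (Set.range G) := by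
      rw [hspan, LinearMap.mem_ker, map_sub]
      have h1 : H.mulVecLin c = 0 := by
        rw [hc, map_sum (g := H.mulVecLin) (f := fun a => (G a : Fin n → ZMod 2))]
        exact Finset.sum_eq_zero fun a _ => LinearMap.mem_ker.mp (hGker a)
      have h2 : H.mulVecLin d = 0 := by
        rw [hd, map_sum]
        have : ∀ a : Fin k, H.mulVecLin (Pi.single (S a) (1 : ZMod 2)) =
            fun b => H b (S a) := by
          intro a
          funext b
          simp [Matrix.mulVecLin_apply, Matrix.mulVec, dotProduct, Pi.single_apply,
            mul_ite, Finset.sum_ite_eq']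
        rw [Finset.sum_congr rfl fun a _ => this a]
        exact hsum
      rw [h1, h2, sub_zero]
    have hz0 : ∀ b, (c - d) (S b) = 0 := by
      intro b
      have hcb : c (S b) = if b ∈ I then 1 else 0 := by
        rw [hc]
        simp only [Finset.sum_apply (S b) I (fun a => (G a : Fin n → ZMod 2)), hGS, Pi.single_apply]
        rw [Finset.sum_ite_eq' I b fun _ => (1 : ZMod 2)]
      have hdb : d (S b) = if b ∈ I then 1 else 0 := by
        rw [hd]
        simp only [Finset.sum_apply, Pi.single_apply]
        simp only [hSinj.eq_iff]
        rw [Finset.sum_ite_eq I b fun _ => (1 : ZMod 2)]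
      simp [Pi.sub_apply, hcb, hdb]
    have := key (c - d) hmem hz0
    exact sub_eq_zero.mp this
  -- Part 1 : vertex cover
  have cover : ∀ i ∈ I, ∀ R : Finset (Fin n), IsRecoverySet G i R → ∃ a ∈ I, S a ∈ R := by
    intro i hi R hrec
    by_contra hno
    push_neg at hno
    set φ : (Fin k → ZMod 2) →ₗ[ZMod 2] ZMod 2 :=
      ∑ a ∈ I, LinearMap.proj a with hφ
    have hφap : ∀ x : Fin k → ZMod 2, φ x = ∑ a ∈ I, x a := by
      intro x
      rw [hφ]
      simp [LinearMap.sum_apply]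
    have hgen : ((fun j => fun a => G a j) '' (R : Set (Fin n))) ⊆
        (LinearMap.ker φ : Set (Fin k → ZMod 2)) := by
      rintro x ⟨j, hj, rfl⟩
      have hx : φ (fun a => G a j) = c j := by
        rw [hφap, hc]
        simp [Finset.sum_apply j I (fun a => (G a : Fin n → ZMod 2))]
      have hdj : d j = 0 := by
        rw [hd]
        simp only [Finset.sum_apply, Pi.single_apply]
        apply Finset.sum_eq_zero
        intro a ha
        rw [if_neg]
        intro h
        exact hno a ha (h ▸ hj)
      simp only [SetLike.mem_coe, LinearMap.mem_ker]
      rw [hx, hcd, hdj]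
    have hker := Submodule.span_le.mpr hgen
    have h0 : φ (Pi.single i 1) = 0 := hker hrec
    have h1 : φ (Pi.single i 1) = 1 := by
      rw [hφap]
      simp only [Pi.single_apply]
      rw [Finset.sum_ite_eq' I i fun _ => (1 : ZMod 2), if_pos hi]
    rw [h0] at h1
    exact one_ne_zero h1.symm
  refine ⟨cover, ?_⟩
  rintro lam ⟨w, hw0, hwrec, hwsum, hwcap⟩ _
  have step1 : ∀ i ∈ I, ∀ R : Finset (Fin n),
      w i R ≤ ∑ a ∈ I, (if S a ∈ R then w i R else 0) := by
    intro i hi R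
    by_cases h : w i R = 0
    · rw [h]
      apply Finset.sum_nonneg
      intro a _
      split <;> simp [h]
    · obtain ⟨a, ha, haR⟩ := cover i hi R (hwrec i R h)
      have hterm := Finset.single_le_sum
        (f := fun a => if S a ∈ R then w i R else 0)
        (fun b _ => by split; exacts [hw0 i R, le_refl 0]) ha
      simpa [haR] using hterm
  calc ∑ i ∈ I, lam i = ∑ i ∈ I, ∑ R : Finset (Fin n), w i R :=
        Finset.sum_congr rfl fun i _ => (hwsum i).symm
    _ ≤ ∑ i ∈ I, ∑ R : Finset (Fin n), ∑ a ∈ I, (if S a ∈ R then w i R else 0) := by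
        apply Finset.sum_le_sum
        intro i hi
        exact Finset.sum_le_sum fun R _ => step1 i hi R
    _ = ∑ a ∈ I, ∑ i ∈ I, ∑ R : Finset (Fin n), (if S a ∈ R then w i R else 0) := by
        rw [Finset.sum_congr rfl fun i _ => Finset.sum_comm, Finset.sum_comm]
    _ ≤ ∑ a ∈ I, ∑ i : Fin k, ∑ R : Finset (Fin n), (if S a ∈ R then w i R else 0) := by
        apply Finset.sum_le_sum
        intro a _
        apply Finset.sum_le_sum_of_subset_of_nonneg (Finset.subset_univ I)
        intro i _ _
        apply Finset.sum_nonneg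
        intro R _
        split
        · exact hw0 i R
        · exact le_refl 0
    _ ≤ ∑ a ∈ I, (1 : ℝ) := Finset.sum_le_sum fun a _ => hwcap (S a)
    _ = (I.card : ℝ) := by simp
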